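/- Let (X,f) be a dynamical system, let n ≥ 1 be an integer and let ε > 0. Then there exists γ > 0, depending only on ε, n, f, such that every set S ⊆ X which is distributionally ε-scrambled for the map fⁿ is distributionally γ-scrambled for f. -/

import Mathlib

open Filter Set

noncomputable section
open scoped Classical

/-- Fraction of times `0 ≤ i < k` at which the `g`-orbits of `x` and `y` are `t`-close,
i.e. `Φ⁽ᵏ⁾_{xy}(t; g)`. -/
def distCount {X : Type*} [MetricSpace X] (g : X → X) (x y : X) (t : ℝ) (k : ℕ) : ℝ :=
  (((Finset.range k).filter fun i => dist (g^[i] x) (g^[i] y) < t).card : ℝ) / k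

/-- `Φ_{xy}(t; g)`, the lower distribution function. -/
def PhiLow {X : Type*} [MetricSpace X] (g : X → X) (x y : X) (t : ℝ) : ℝ :=
  liminf (fun k => distCount g x y t k) atTop

/-- `Φ*_{xy}(t; g)`, the upper distribution function. -/
def PhiUp {X : Type*} [MetricSpace X] (g : X → X) (x y : X) (t : ℝ) : ℝ :=
  limsup (fun k => distCount g x y t k) atTop

/-- `S` is distributionally `ε`-scrambled for `g`. -/
def DistScrambled {X : Type*} [MetricSpace X] (g : X → X) (S : Set X) (ε : ℝ) : Prop :=
  ∀ x ∈ S, ∀ y ∈ S, x ≠ y →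
    (∀ t : ℝ, 0 < t → PhiUp g x y t = 1) ∧ PhiLow g x y ε = 0

lemma distCount_nonneg {X : Type*} [MetricSpace X] (g : X → X) (x y : X) (t : ℝ) (k : ℕ) :
    0 ≤ distCount g x y t k := by
  unfold distCount; positivity

lemma distCount_le_one {X : Type*} [MetricSpace X] (g : X → X) (x y : X) (t : ℝ) (k : ℕ) :
    distCount g x y t k ≤ 1 := by
  unfold distCount
  rcases Nat.eq_zero_or_pos k with h | h
  · simp [h]
  · rw [div_le_one (by exact_mod_cast h)]
    exact_mod_cast (Finset.card_filter_le _ _).trans (Finset.card_range k).le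

lemma uc_iter {X : Type*} [MetricSpace X] [CompactSpace X]
    (f : X → X) (hf : Continuous f) (N : ℕ) {t : ℝ} (ht : 0 < t) :
    ∃ δ : ℝ, 0 < δ ∧ ∀ j < N, ∀ a b : X, dist a b < δ → dist (f^[j] a) (f^[j] b) < t := by
  induction N with
  | zero => exact ⟨t, ht, fun j hj => by omega⟩
  | succ N ih =>
    obtain ⟨δ, hδ, hδp⟩ := ih
    have huc : UniformContinuous (f^[N]) :=
      CompactSpace.uniformContinuous_of_continuous (hf.iterate N)
    obtain ⟨δ', hδ', hδ'p⟩ := Metric.uniformContinuous_iff.mp huc t ht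
    refine ⟨min δ δ', lt_min hδ hδ', fun j hj a b hab => ?_⟩
    rcases Nat.lt_succ_iff_lt_or_eq.mp hj with h | h
    · exact hδp j h a b (hab.trans_le (min_le_left _ _))
    · subst h; exact hδ'p (hab.trans_le (min_le_right _ _))

lemma count_A {X : Type*} [MetricSpace X] (f : X → X) (x y : X)
    {n : ℕ} (hn : 1 ≤ n) {δ t : ℝ}
    (hδ : ∀ j < n, ∀ a b : X, dist a b < δ → dist (f^[j] a) (f^[j] b) < t) (k : ℕ) :
    distCount (f^[n]) x y δ k ≤ distCount f x y t (n * k) := by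
  rcases Nat.eq_zero_or_pos k with hk | hk
  · simp [hk, distCount]
  set s := (Finset.range k).filter fun i => dist ((f^[n])^[i] x) ((f^[n])^[i] y) < δ with hs
  set T := (Finset.range (n * k)).filter fun m => dist (f^[m] x) (f^[m] y) < t with hT
  have key : s.card * n ≤ T.card := by
    have := Finset.card_le_card_of_injOn (f := fun p : ℕ × ℕ => p.2 + n * p.1)
      (s := s ×ˢ Finset.range n) (t := T) ?_ ?_
    · simpa [Finset.card_product] using this
    · rintro ⟨i, j⟩ hij
      simp only [Finset.mem_coe, Finset.mem_product, hs, Finset.mem_filter, Finset.mem_range] at hij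
      obtain ⟨⟨hik, hid⟩, hjn⟩ := hij
      rw [Finset.mem_coe, hT, Finset.mem_filter, Finset.mem_range]
      constructor
      · calc j + n * i < n + n * i := by omega
          _ = n * (i + 1) := by ring
          _ ≤ n * k := Nat.mul_le_mul_left n hik
      · have hiter : f^[n * i] = (f^[n])^[i] := Function.iterate_mul f n i
        rw [Function.iterate_add_apply, Function.iterate_add_apply, hiter]
        exact hδ j hjn _ _ hid
    · rintro ⟨i, j⟩ hij ⟨i', j'⟩ hij' heq
      simp only [Finset.mem_coe, Finset.mem_product, Finset.mem_range] at hij hij'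
      simp only at heq
      have hdiv : ∀ a b : ℕ, b < n → (b + n * a) / n = a := by
        intro a b hb
        rw [mul_comm, Nat.add_mul_div_right _ _ (by omega : 0 < n), Nat.div_eq_of_lt hb]; omega
      have hi : i = i' := by
        have h1 := hdiv i j hij.2
        have h2 := hdiv i' j' hij'.2
        rw [← h1, ← h2, heq]
      subst hi
      have : j = j' := by omega
      simp [this]
  rcases Nat.eq_zero_or_pos s.card with h0 | h0
  · unfold distCount
    rw [← hs, ← hT, h0]
    simp only [Nat.cast_zero, zero_div]
    positivity
  unfold distCount
  rw [← hs, ← hT]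
  rw [div_le_div_iff₀ (by exact_mod_cast hk) (by positivity)]
  push_cast
  calc (s.card : ℝ) * (n * k) = (s.card * n : ℕ) * k := by push_cast; ring
    _ ≤ (T.card : ℝ) * k := by
        have : ((s.card * n : ℕ) : ℝ) ≤ (T.card : ℝ) := by exact_mod_cast key
        exact mul_le_mul_of_nonneg_right this (by positivity)

lemma count_B {X : Type*} [MetricSpace X] (f : X → X) (x y : X)
    {n : ℕ} (hn : 1 ≤ n) {γ ε : ℝ}
    (hγ : ∀ j ≤ n, ∀ a b : X, dist a b < γ → dist (f^[j] a) (f^[j] b) < ε)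
    {k : ℕ} (hk : 1 ≤ k) :
    distCount f x y γ (n * k) ≤ 2 * distCount (f^[n]) x y ε (k + 1) := by
  set s := (Finset.range (n * k)).filter fun m => dist (f^[m] x) (f^[m] y) < γ with hs
  set T := (Finset.range (k + 1)).filter fun i => dist ((f^[n])^[i] x) ((f^[n])^[i] y) < ε with hT
  have key : s.card ≤ n * T.card := by
    apply Finset.card_le_mul_card_image_of_maps_to (f := fun m => m / n + 1)
    · intro m hm
      rw [hs, Finset.mem_filter, Finset.mem_range] at hm
      obtain ⟨hmk, hmd⟩ := hm
      rw [hT, Finset.mem_filter, Finset.mem_range]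
      constructor
      · have : m / n < k := Nat.div_lt_of_lt_mul hmk
        omega
      · have hiter : (f^[n])^[m / n + 1] = f^[n * (m / n + 1)] :=
          (Function.iterate_mul f n (m / n + 1)).symm
        have hkey : n * (m / n + 1) = (n - m % n) + m := by
          have h1 := Nat.div_add_mod m n
          have h2 : m % n < n := Nat.mod_lt m (by omega)
          rw [Nat.mul_succ]
          generalize n * (m / n) = a at h1 ⊢
          omega
        rw [hiter, hkey, Function.iterate_add_apply, Function.iterate_add_apply]
        exact hγ (n - m % n) (by omega) _ _ hmd
    · intro v hv
      have hsub : (s.filter fun m => m / n + 1 = v) ⊆ Finset.Ico (n * (v - 1)) (n * (v - 1) + n) := by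
        intro m hm
        rw [Finset.mem_filter] at hm
        have hdv : m / n = v - 1 := by
          have h := hm.2
          generalize m / n = q at h ⊢
          omega
        have h1 := Nat.div_add_mod m n
        have h2 : m % n < n := Nat.mod_lt m (by omega)
        rw [Finset.mem_Ico, ← hdv]
        generalize n * (m / n) = a at h1 ⊢
        omega
      calc (s.filter fun m => m / n + 1 = v).card ≤ _ := Finset.card_le_card hsub
        _ ≤ n := by rw [Nat.card_Ico]; omega
  unfold distCount
  rw [← hs, ← hT]
  have hnk : (0:ℝ) < (n * k : ℕ) := by positivity
  rw [div_le_iff₀ hnk]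
  have h1 : (s.card : ℝ) ≤ n * T.card := by exact_mod_cast key
  have hk1 : (0:ℝ) < (k:ℝ) + 1 := by positivity
  have h2 : (n : ℝ) * T.card ≤ 2 * ((T.card : ℝ) / ((k:ℝ) + 1)) * (n * k) := by
    have heq : 2 * ((T.card : ℝ) / ((k:ℝ) + 1)) * ((n:ℝ) * k) = (2 * T.card * ((n:ℝ) * k)) / ((k:ℝ) + 1) := by
      ring
    rw [heq, le_div_iff₀ hk1]
    nlinarith [(show (1:ℝ) ≤ (k:ℝ) by exact_mod_cast hk),
      (show (0:ℝ) ≤ (T.card:ℝ) by positivity),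
      (show (1:ℝ) ≤ (n:ℝ) by exact_mod_cast hn)]
  push_cast
  push_cast at h2
  linarith

lemma distCount_bddAbove {X : Type*} [MetricSpace X] (g : X → X) (x y : X) (t : ℝ) :
    IsBoundedUnder (· ≤ ·) atTop (fun k => distCount g x y t k) :=
  isBoundedUnder_of ⟨1, fun k => distCount_le_one g x y t k⟩

lemma distCount_bddBelow {X : Type*} [MetricSpace X] (g : X → X) (x y : X) (t : ℝ) :
    IsBoundedUnder (· ≥ ·) atTop (fun k => distCount g x y t k) :=
  isBoundedUnder_of ⟨0, fun k => distCount_nonneg g x y t k⟩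


theorem scrambled_for_iterate_implies_scrambled
    {X : Type*} [MetricSpace X] [CompactSpace X]
    (f : X → X) (hf : Continuous f)
    (n : ℕ) (hn : 1 ≤ n) (ε : ℝ) (hε : 0 < ε) :
    ∃ γ : ℝ, 0 < γ ∧ ∀ S : Set X,
      DistScrambled (f^[n]) S ε → DistScrambled f S γ := by
  obtain ⟨γ, hγ0, hγp⟩ := uc_iter f hf (n + 1) hε
  have hγ' : ∀ j ≤ n, ∀ a b : X, dist a b < γ → dist (f^[j] a) (f^[j] b) < ε :=
    fun j hj => hγp j (by omega)
  refine ⟨γ, hγ0, fun S hS x hx y hy hxy => ?_⟩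
  obtain ⟨hUp, hLow⟩ := hS x hx y hy hxy
  have htendmul : Tendsto (fun k : ℕ => n * k) atTop atTop :=
    tendsto_atTop_mono (fun k => Nat.le_mul_of_pos_left k (by omega)) tendsto_id
  constructor
  · intro t ht
    obtain ⟨δ, hδ0, hδp⟩ := uc_iter f hf n ht
    have hmono := count_A f x y hn hδp
    apply le_antisymm
    · exact limsup_le_of_le ((distCount_bddBelow f x y t).isCoboundedUnder_le)
        (Filter.Eventually.of_forall fun k => distCount_le_one f x y t k)
    · apply le_of_forall_lt_imp_le_of_dense
      intro c hc
      have h1 : c < PhiUp (f^[n]) x y δ := by rw [hUp δ hδ0]; exact hc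
      have hfreq : ∃ᶠ k in atTop, c < distCount (f^[n]) x y δ k :=
        frequently_lt_of_lt_limsup ((distCount_bddBelow _ x y δ).isCoboundedUnder_le) h1
      have hfreq2 : ∃ᶠ m in atTop, c ≤ distCount f x y t m :=
        htendmul.frequently (hfreq.mono fun k hk => hk.le.trans (hmono k))
      exact le_limsup_of_frequently_le hfreq2 (distCount_bddAbove f x y t)
  · apply le_antisymm
    · apply le_of_forall_gt_imp_ge_of_dense
      intro c hc
      have h1 : PhiLow (f^[n]) x y ε < c / 2 := by rw [hLow]; positivity
      have hfreq : ∃ᶠ j in atTop, distCount (f^[n]) x y ε j < c / 2 :=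
        frequently_lt_of_liminf_lt ((distCount_bddAbove _ x y ε).isCoboundedUnder_ge) h1
      have hfreq2 := hfreq.and_eventually (eventually_ge_atTop 2)
      have htend : Tendsto (fun j : ℕ => n * (j - 1)) atTop atTop :=
        htendmul.comp (tendsto_sub_atTop_nat 1)
      have hfreq3 : ∃ᶠ m in atTop, distCount f x y γ m ≤ c := by
        apply htend.frequently
        refine hfreq2.mono fun j hj => ?_
        obtain ⟨h2, hj2⟩ := hj
        have hb := count_B f x y hn hγ' (k := j - 1) (by omega)
        have hj1 : j - 1 + 1 = j := by omega
        rw [hj1] at hb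
        calc distCount f x y γ (n * (j - 1)) ≤ 2 * distCount (f^[n]) x y ε j := hb
          _ ≤ 2 * (c / 2) := by linarith
          _ = c := by ring
      exact liminf_le_of_frequently_le hfreq3 (distCount_bddBelow f x y γ)
    · exact le_liminf_of_le ((distCount_bddAbove f x y γ).isCoboundedUnder_ge)
        (Filter.Eventually.of_forall fun k => distCount_nonneg f x y γ k)
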